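/- arXiv:2302.00037 — 3 statements merged into one kernel-verified Lean document; each statement's English description precedes it below -/
import Mathlib

section
/- For any weighted graph G on V with |V| = n ≥ 3 and any binary tree T with leaf set V, if (A,B) is the balanced cut of T, then ω_G(T) ≥ (2n/3)·w(A,B). -/
open Finset

inductive BTree (V : Type) : Type
  | leaf : V → BTree V
  | node : BTree V → BTree V → BTree V
  deriving DecidableEq

namespace BTree

variable {V : Type} [DecidableEq V]

def leavesList : BTree V → List V
  | leaf x => [x]
  | node L R => L.leavesList ++ R.leavesList

def leaves (T : BTree V) : Finset V :=
  T.leavesList.toFinset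

def cluster : BTree V → V → V → Finset V
  | leaf x, _, _ => {x}
  | node L R, u, v =>
    if u ∈ L.leaves ∧ v ∈ L.leaves then L.cluster u v
    else if u ∈ R.leaves ∧ v ∈ R.leaves then R.cluster u v
    else (node L R).leaves

end BTree

section
variable {V : Type} [Fintype V] [DecidableEq V]

def IsHC (T : BTree V) : Prop :=
  T.leavesList.Nodup ∧ T.leaves = Finset.univ

def IsWeight (w : V → V → ℝ) : Prop :=
  (∀ u v, 0 ≤ w u v) ∧ (∀ u v, w u v = w v u) ∧ ∀ u, w u u = 0

noncomputable def cost (w : V → V → ℝ) (T : BTree V) : ℝ :=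
  (1 / 2) * ∑ u : V, ∑ v : V, w u v * ((T.cluster u v).card : ℝ)

noncomputable def optCost (w : V → V → ℝ) : ℝ :=
  sInf {c : ℝ | ∃ T : BTree V, IsHC T ∧ cost w T = c}

noncomputable def graphDist (w w' : V → V → ℝ) : ℝ :=
  (1 / 2) * ∑ u : V, ∑ v : V, |w u v - w' u v|

noncomputable def cutW (w : V → V → ℝ) (A B : Finset V) : ℝ :=
  ∑ a ∈ A, ∑ b ∈ B, w a b

def IsEdgeDP (A : (V → V → ℝ) → PMF (BTree V)) (ε : ℝ) : Prop :=
  ∀ w w' : V → V → ℝ, IsWeight w → IsWeight w' → graphDist w w' ≤ 1 →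
    ∀ S : Set (BTree V),
      (A w').toOuterMeasure S ≤ ENNReal.ofReal (Real.exp ε) * (A w).toOuterMeasure S

end

/-- The node reached by starting at the root and repeatedly descending to the child with more
leaves in its subtree, stopping at the first node whose subtree has fewer than `2n/3` leaves.
Its leaf set is the first part of the balanced cut of the tree. -/
def bsub {V : Type} [DecidableEq V] (n : ℕ) : BTree V → BTree V
  | .leaf x => .leaf x
  | .node L R =>
    if 3 * (BTree.node L R).leaves.card < 2 * n then .node L R
    else if R.leaves.card ≤ L.leaves.card then bsub n L else bsub n R

section Aux

variable {V : Type} [DecidableEq V]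

lemma leaves_node (L R : BTree V) : (BTree.node L R).leaves = L.leaves ∪ R.leaves := by
  simp [BTree.leaves, BTree.leavesList]

lemma cluster_comm (T : BTree V) (u v : V) : T.cluster u v = T.cluster v u := by
  induction T with
  | leaf x => rfl
  | node L R ihL ihR =>
    simp only [BTree.cluster]
    by_cases h1 : u ∈ L.leaves <;> by_cases h2 : v ∈ L.leaves <;>
    by_cases h3 : u ∈ R.leaves <;> by_cases h4 : v ∈ R.leaves <;>
    simp [h1, h2, h3, h4, ihL, ihR]

lemma bsub_leaves_subset (n : ℕ) (T : BTree V) : (bsub n T).leaves ⊆ T.leaves := by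
  induction T with
  | leaf x => simp [bsub]
  | node L R ihL ihR =>
    rw [bsub]
    split
    · exact subset_rfl
    · split
      · exact ihL.trans (by rw [leaves_node]; exact Finset.subset_union_left)
      · exact ihR.trans (by rw [leaves_node]; exact Finset.subset_union_right)

lemma key_lemma (n : ℕ) (T : BTree V) (hnd : T.leavesList.Nodup) {u v : V}
    (hu : u ∈ (bsub n T).leaves) (hv : v ∈ T.leaves) (hv' : v ∉ (bsub n T).leaves) :
    2 * n ≤ 3 * (T.cluster u v).card := by
  induction T with
  | leaf x =>
    rw [bsub] at hv'
    exact absurd hv hv'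
  | node L R ihL ihR =>
    rw [BTree.leavesList, List.nodup_append] at hnd
    obtain ⟨hndL, hndR, hdisj⟩ := hnd
    by_cases hbig : 3 * (BTree.node L R).leaves.card < 2 * n
    · rw [bsub, if_pos hbig] at hv'
      exact absurd hv hv'
    · rw [bsub, if_neg hbig] at hu hv'
      by_cases hLR : R.leaves.card ≤ L.leaves.card
      · rw [if_pos hLR] at hu hv'
        have huL : u ∈ L.leaves := bsub_leaves_subset n L hu
        have huR : u ∉ R.leaves := fun h =>
          hdisj u (List.mem_toFinset.mp huL) u (List.mem_toFinset.mp h) rfl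
        by_cases hvL : v ∈ L.leaves
        · rw [BTree.cluster, if_pos ⟨huL, hvL⟩]
          exact ihL hndL hu hvL hv'
        · rw [BTree.cluster, if_neg (by tauto), if_neg (by tauto)]
          omega
      · rw [if_neg hLR] at hu hv'
        have huR : u ∈ R.leaves := bsub_leaves_subset n R hu
        have huL : u ∉ L.leaves := fun h =>
          hdisj u (List.mem_toFinset.mp h) u (List.mem_toFinset.mp huR) rfl
        by_cases hvR : v ∈ R.leaves
        · rw [BTree.cluster, if_neg (by tauto), if_pos ⟨huR, hvR⟩]
          exact ihR hndR hu hvR hv'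
        · rw [BTree.cluster, if_neg (by tauto), if_neg (by tauto)]
          omega

end Aux

/-- For any weighted graph `G` on `V` with `|V| = n ≥ 3` and any binary tree
`T` with leaf set `V`, if `(A, B)` is the balanced cut of `T`, then
`ω_G(T) ≥ (2n/3) · w(A, B)`. -/
theorem cost_ge_balanced_cut (V : Type) [Fintype V] [DecidableEq V] (n : ℕ) (hn : 3 ≤ n)
    (hcard : Fintype.card V = n) (w : V → V → ℝ) (hw : IsWeight w)
    (T : BTree V) (hT : IsHC T) :
    2 * (n : ℝ) / 3 * cutW w (bsub n T).leaves ((bsub n T).leaves)ᶜ ≤ cost w T := by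
  classical
  obtain ⟨hw0, hwsymm, -⟩ := hw
  set A := (bsub n T).leaves with hA
  set f : V → V → ℝ := fun u v => w u v * ((T.cluster u v).card : ℝ) with hf
  have hf0 : ∀ u v, 0 ≤ f u v := fun u v =>
    mul_nonneg (hw0 u v) (Nat.cast_nonneg _)
  have hfsymm : ∀ u v, f u v = f v u := fun u v => by
    simp only [hf, hwsymm u v, cluster_comm T u v]
  have hterm : ∀ a ∈ A, ∀ b ∈ Aᶜ, 2 * (n : ℝ) / 3 * w a b ≤ f a b := by
    intro a ha b hb
    have hk : 2 * n ≤ 3 * (T.cluster a b).card :=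
      key_lemma n T hT.1 ha (by rw [hT.2]; exact Finset.mem_univ b)
        (by simpa using hb)
    have hk' : 2 * (n : ℝ) / 3 ≤ ((T.cluster a b).card : ℝ) := by
      have : (2 * n : ℝ) ≤ 3 * ((T.cluster a b).card : ℝ) := by exact_mod_cast hk
      linarith
    calc 2 * (n : ℝ) / 3 * w a b ≤ ((T.cluster a b).card : ℝ) * w a b :=
          mul_le_mul_of_nonneg_right hk' (hw0 a b)
      _ = f a b := mul_comm _ _
  have hS : 2 * (n : ℝ) / 3 * cutW w A Aᶜ ≤ ∑ a ∈ A, ∑ b ∈ Aᶜ, f a b := by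
    rw [cutW, Finset.mul_sum]
    refine Finset.sum_le_sum fun a ha => ?_
    rw [Finset.mul_sum]
    exact Finset.sum_le_sum fun b hb => hterm a ha b hb
  have hBA : ∑ a ∈ Aᶜ, ∑ b ∈ A, f a b = ∑ a ∈ A, ∑ b ∈ Aᶜ, f a b := by
    rw [Finset.sum_comm]
    exact Finset.sum_congr rfl fun a _ => Finset.sum_congr rfl fun b _ => hfsymm b a
  have htotal : (∑ a ∈ A, ∑ b ∈ Aᶜ, f a b) + (∑ a ∈ Aᶜ, ∑ b ∈ A, f a b)
      ≤ ∑ u : V, ∑ v : V, f u v := by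
    rw [← Finset.sum_add_sum_compl A (fun u => ∑ v : V, f u v)]
    have h1 : ∑ a ∈ A, ∑ b ∈ Aᶜ, f a b ≤ ∑ a ∈ A, ∑ v : V, f a v :=
      Finset.sum_le_sum fun a _ =>
        Finset.sum_le_sum_of_subset_of_nonneg (Finset.subset_univ _)
          (fun b _ _ => hf0 a b)
    have h2 : ∑ a ∈ Aᶜ, ∑ b ∈ A, f a b ≤ ∑ a ∈ Aᶜ, ∑ v : V, f a v :=
      Finset.sum_le_sum fun a _ =>
        Finset.sum_le_sum_of_subset_of_nonneg (Finset.subset_univ _)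
          (fun b _ _ => hf0 a b)
    linarith
  rw [cost]
  rw [hBA] at htotal
  have : ∑ a ∈ A, ∑ b ∈ Aᶜ, f a b ≤ (1 / 2) * ∑ u : V, ∑ v : V, f u v := by
    linarith
  calc 2 * (n : ℝ) / 3 * cutW w A Aᶜ ≤ ∑ a ∈ A, ∑ b ∈ Aᶜ, f a b := hS
    _ ≤ (1 / 2) * ∑ u : V, ∑ v : V, f u v := this
    _ = (1 / 2) * ∑ u : V, ∑ v : V, w u v * ((T.cluster u v).card : ℝ) := rfl
end

section
/- Let n be divisible by 5 with n ≥ 5, let G ∈ P(n,5), and let T be a binary tree with leaf set V whose balanced cut (A,B) misses at least α·(n/5) of the n/5 cycles of G, for some 0 < α ≤ 1. Then ω_G(T) ≥ (4α/15)·n². -/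
open Finset

/-- The weight function of a vertex-disjoint union of `m` cycles of length 5 (all present
edges having weight 1), described by a bijection `σ` sending each vertex to a pair
(cycle index, position on the cycle). -/
def cycleW {V : Type} {m : ℕ} (σ : V ≃ Fin m × ZMod 5) : V → V → ℝ := fun u v =>
  if (σ u).1 = (σ v).1 ∧ ((σ u).2 = (σ v).2 + 1 ∨ (σ v).2 = (σ u).2 + 1) then 1 else 0

/-- The set of 5-cycles missed by the cut `(A, Aᶜ)` : those having at least one vertex in `A`
and at least one vertex outside `A`. -/
def missed {V : Type} [Fintype V] [DecidableEq V] {m : ℕ} (σ : V ≃ Fin m × ZMod 5)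
    (A : Finset V) : Finset (Fin m) :=
  Finset.univ.filter fun i => (∃ u ∈ A, (σ u).1 = i) ∧ (∃ v ∈ Aᶜ, (σ v).1 = i)

namespace BTree
variable {V : Type} [DecidableEq V]

lemma leaves_node (L R : BTree V) : (node L R).leaves = L.leaves ∪ R.leaves := by
  simp [leaves, leavesList]

lemma cluster_symm (T : BTree V) (u v : V) : T.cluster u v = T.cluster v u := by
  induction T with
  | leaf x => rfl
  | node L R ihL ihR =>
    simp only [cluster]
    split_ifs <;> first | exact ihL | exact ihR | rfl | tauto

lemma bsub_leaves_subset (n : ℕ) (T : BTree V) : (bsub n T).leaves ⊆ T.leaves := by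
  induction T with
  | leaf x => simp [bsub]
  | node L R ihL ihR =>
    rw [bsub]
    split
    · exact Finset.Subset.refl _
    · split
      · exact ihL.trans (by rw [leaves_node]; exact Finset.subset_union_left)
      · exact ihR.trans (by rw [leaves_node]; exact Finset.subset_union_right)

lemma bsub_eq_self (n : ℕ) (T : BTree V) (h : 3 * T.leaves.card < 2 * n) : bsub n T = T := by
  cases T with
  | leaf x => rfl
  | node L R => rw [bsub, if_pos h]

lemma cluster_card (n : ℕ) (T : BTree V) (hnd : T.leavesList.Nodup)
    (h2 : 2 * n ≤ 3 * T.leaves.card) (u v : V)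
    (hu : u ∈ (bsub n T).leaves) (hv : v ∈ T.leaves) (hv' : v ∉ (bsub n T).leaves) :
    2 * n ≤ 3 * (T.cluster u v).card := by
  induction T with
  | leaf x => exact absurd hv hv'
  | node L R ihL ihR =>
    have hndL : L.leavesList.Nodup := (List.nodup_append.mp hnd).1
    have hndR : R.leavesList.Nodup := (List.nodup_append.mp hnd).2.1
    have hdisj : ∀ x, x ∈ L.leaves → x ∉ R.leaves := by
      intro x hxL hxR
      exact (List.nodup_append'.mp hnd).2.2 (by simpa [leaves] using hxL)
        (by simpa [leaves] using hxR)
    have hnotlt : ¬ (3 * (node L R).leaves.card < 2 * n) := not_lt.mpr h2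
    rw [bsub, if_neg hnotlt] at hu hv'
    by_cases hLR : R.leaves.card ≤ L.leaves.card
    · rw [if_pos hLR] at hu hv'
      have huL : u ∈ L.leaves := bsub_leaves_subset n L hu
      by_cases hvL : v ∈ L.leaves
      · have hL2 : 2 * n ≤ 3 * L.leaves.card := by
          by_contra hc
          exact hv' (by rw [bsub_eq_self n L (not_le.mp hc)]; exact hvL)
        rw [cluster, if_pos ⟨huL, hvL⟩]
        exact ihL hndL hL2 hu hvL hv'
      · rw [cluster, if_neg (fun h => hvL h.2),
          if_neg (fun h => hdisj u huL h.1)]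
        exact h2
    · rw [if_neg hLR] at hu hv'
      have huR : u ∈ R.leaves := bsub_leaves_subset n R hu
      by_cases hvR : v ∈ R.leaves
      · have hR2 : 2 * n ≤ 3 * R.leaves.card := by
          by_contra hc
          exact hv' (by rw [bsub_eq_self n R (not_le.mp hc)]; exact hvR)
        rw [cluster, if_neg (fun h => hdisj u h.1 huR), if_pos ⟨huR, hvR⟩]
        exact ihR hndR hR2 hu hvR hv'
      · rw [cluster, if_neg (fun h => hdisj u h.1 huR), if_neg (fun h => hvR h.2)]
        exact h2

end BTree

lemma zmod5_cross (f : ZMod 5 → Bool) (h1 : ∃ j, f j = true) (h0 : ∃ j, f j = false) :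
    4 ≤ ((Finset.univ : Finset (ZMod 5 × ZMod 5)).filter
      (fun q => (q.1 = q.2 + 1 ∨ q.2 = q.1 + 1) ∧ f q.1 ≠ f q.2)).card := by
  revert h1 h0; revert f; decide


/-- Let `5 ∣ n`, `n ≥ 5`, let `G ∈ P(n,5)` (a disjoint union of `n/5`
5-cycles, described by `σ`), and let `T` be a binary tree with leaf set `V` whose balanced cut
misses at least `α·(n/5)` of the cycles of `G`, for some `0 < α ≤ 1`.
Then `ω_G(T) ≥ (4α/15)·n²`. -/

theorem cost_lower_of_missed_cycles (n : ℕ) (hn5 : 5 ∣ n) (hn : 5 ≤ n)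
    (V : Type) [Fintype V] [DecidableEq V] (hcard : Fintype.card V = n)
    (σ : V ≃ Fin (n / 5) × ZMod 5) (T : BTree V) (hT : IsHC T)
    (α : ℝ) (hα0 : 0 < α) (hα1 : α ≤ 1)
    (hmiss : α * ((n : ℝ) / 5) ≤ ((missed σ (bsub n T).leaves).card : ℝ)) :
    4 * α / 15 * (n : ℝ) ^ 2 ≤ cost (cycleW σ) T := by
  classical
  set A : Finset V := (bsub n T).leaves with hA
  have hleaves : T.leaves = Finset.univ := hT.2
  have hcardT : T.leaves.card = n := by rw [hleaves, Finset.card_univ, hcard]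
  have h2n : 2 * n ≤ 3 * T.leaves.card := by omega
  -- the set of ordered crossing edge pairs
  set X : Finset (V × V) := Finset.univ.filter (fun p =>
      ((σ p.1).1 = (σ p.2).1 ∧ ((σ p.1).2 = (σ p.2).2 + 1 ∨ (σ p.2).2 = (σ p.1).2 + 1)) ∧
      ((p.1 ∈ A ∧ p.2 ∉ A) ∨ (p.1 ∉ A ∧ p.2 ∈ A))) with hX
  -- per-pair lower bound
  have hpair : ∀ p ∈ X, 2 * (n : ℝ) / 3 ≤ cycleW σ p.1 p.2 * ((T.cluster p.1 p.2).card : ℝ) := by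
    intro p hp
    rw [hX, Finset.mem_filter] at hp
    obtain ⟨-, hadj, hcross⟩ := hp
    have hw : cycleW σ p.1 p.2 = 1 := if_pos hadj
    have hcc : 2 * n ≤ 3 * (T.cluster p.1 p.2).card := by
      rcases hcross with ⟨h1, h2⟩ | ⟨h1, h2⟩
      · exact BTree.cluster_card n T hT.1 h2n p.1 p.2 h1 (by rw [hleaves]; exact Finset.mem_univ _) h2
      · rw [BTree.cluster_symm]
        exact BTree.cluster_card n T hT.1 h2n p.2 p.1 h2 (by rw [hleaves]; exact Finset.mem_univ _) h1
    rw [hw, one_mul]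
    have := (Nat.cast_le (α := ℝ)).mpr hcc
    push_cast at this
    linarith
  -- each missed cycle contributes at least 4 pairs to X
  have hfiber : ∀ i ∈ missed σ A, 4 ≤ (X.filter (fun p => (σ p.1).1 = i)).card := by
    intro i hi
    rw [missed, Finset.mem_filter] at hi
    obtain ⟨-, ⟨u0, hu0, hu0i⟩, ⟨v0, hv0, hv0i⟩⟩ := hi
    set f : ZMod 5 → Bool := fun j => decide (σ.symm (i, j) ∈ A) with hf
    have key : ∀ j : ZMod 5, (σ.symm (i, j) ∈ A) ↔ f j = true := by
      intro j; simp [hf]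
    have h1 : ∃ j, f j = true := by
      refine ⟨(σ u0).2, ?_⟩
      rw [← key]
      have : ((i, (σ u0).2) : Fin (n/5) × ZMod 5) = σ u0 := by
        rw [← hu0i]
      rw [this, Equiv.symm_apply_apply]
      exact hu0
    have h0 : ∃ j, f j = false := by
      refine ⟨(σ v0).2, ?_⟩
      have : ((i, (σ v0).2) : Fin (n/5) × ZMod 5) = σ v0 := by
        rw [← hv0i]
      simp only [hf, this, Equiv.symm_apply_apply, decide_eq_false_iff_not]
      exact Finset.mem_compl.mp hv0
    refine le_trans (zmod5_cross f h1 h0) ?_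
    apply Finset.card_le_card_of_injOn
      (fun q => (σ.symm (i, q.1), σ.symm (i, q.2)))
    · intro q hq
      rw [Finset.mem_coe, Finset.mem_filter] at hq ⊢
      obtain ⟨-, hadj, hne⟩ := hq
      refine ⟨?_, by simp⟩
      rw [hX, Finset.mem_filter]
      refine ⟨Finset.mem_univ _, ?_, ?_⟩
      · simp only [Equiv.apply_symm_apply]
        exact ⟨by simp, hadj⟩
      · rcases Bool.eq_false_or_eq_true (f q.1) with hq1 | hq1 <;>
          rcases Bool.eq_false_or_eq_true (f q.2) with hq2 | hq2
        · exact absurd (hq1.trans hq2.symm) hne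
        · exact Or.inl ⟨(key q.1).mpr hq1,
            fun h => absurd ((key q.2).mp h) (by simp [hq2])⟩
        · exact Or.inr ⟨fun h => absurd ((key q.1).mp h) (by simp [hq1]),
            (key q.2).mpr hq2⟩
        · exact absurd (hq1.trans hq2.symm) hne
    · intro q hq q' hq' heq
      simp only [Prod.mk.injEq] at heq
      have e1 := σ.symm.injective heq.1
      have e2 := σ.symm.injective heq.2
      exact Prod.ext (by injection e1) (by injection e2)
  -- |X| ≥ 4 * |missed|
  have hXcard : 4 * (missed σ A).card ≤ X.card := by
    have hXeq : X.card = ∑ i : Fin (n/5), (X.filter (fun p => (σ p.1).1 = i)).card :=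
      Finset.card_eq_sum_card_fiberwise (fun p _ => Finset.mem_univ _)
    rw [hXeq]
    calc 4 * (missed σ A).card = ∑ _i ∈ missed σ A, 4 := by
          rw [Finset.sum_const, smul_eq_mul, mul_comm]
      _ ≤ ∑ i ∈ missed σ A, (X.filter (fun p => (σ p.1).1 = i)).card :=
          Finset.sum_le_sum hfiber
      _ ≤ ∑ i : Fin (n/5), (X.filter (fun p => (σ p.1).1 = i)).card :=
          Finset.sum_le_sum_of_subset (Finset.subset_univ _)
  -- lower bound the total sum
  have hsum : (X.card : ℝ) * (2 * (n : ℝ) / 3) ≤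
      ∑ u : V, ∑ v : V, cycleW σ u v * ((T.cluster u v).card : ℝ) := by
    rw [← Finset.sum_product']
    have hsub : X ⊆ Finset.univ ×ˢ Finset.univ := by
      rw [Finset.univ_product_univ]; exact Finset.subset_univ _
    refine le_trans ?_ (Finset.sum_le_sum_of_subset_of_nonneg hsub ?_)
    · calc (X.card : ℝ) * (2 * (n : ℝ) / 3) = ∑ _p ∈ X, 2 * (n : ℝ) / 3 := by
            rw [Finset.sum_const, nsmul_eq_mul]
        _ ≤ ∑ p ∈ X, cycleW σ p.1 p.2 * ((T.cluster p.1 p.2).card : ℝ) :=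
            Finset.sum_le_sum hpair
    · intro p _ _
      apply mul_nonneg _ (Nat.cast_nonneg _)
      unfold cycleW
      split <;> norm_num
  -- put it together
  have hn' : (5 : ℝ) ≤ (n : ℝ) := by exact_mod_cast hn
  have hXR : 4 * (α * ((n : ℝ) / 5)) ≤ (X.card : ℝ) := by
    have h4 : (4 : ℝ) * ((missed σ A).card : ℝ) ≤ (X.card : ℝ) := by
      exact_mod_cast hXcard
    nlinarith
  rw [cost]
  have hfrac : 0 ≤ 2 * (n : ℝ) / 3 := by linarith
  have := mul_le_mul_of_nonneg_right hXR hfrac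
  nlinarith
end

section
/- There exists n₀ such that for all n ≥ n₀ with 5 | n the following holds: if G₁ and G₂ are drawn independently and uniformly at random from P(n,5), then the probability that there exists a balanced cut (A,B) of V that misses at most n/500 of the cycles of G₁ and also misses at most n/500 of the cycles of G₂ is at most 2^{−0.4n}. -/
open Finset

namespace TGP

lemma aux_pow (t : ℕ) (ht : 12 ≤ t) : 1000*t + 1001 ≤ 16 * 2^t := by
  induction t, ht using Nat.le_induction with
  | base => norm_num
  | succ t ht ih =>
    have : 2^(t+1) = 2 * 2^t := by ring
    rw [this]
    omega

lemma aux_pow2 (m : ℕ) (hm : 2400 ≤ m) : 5*m+1 ≤ 2^(m/200 + 4) := by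
  set t := m/200 with htdef
  have h1 : m < 200 * (t+1) := by
    have : m / 200 * 200 + 200 > m := by
      have := Nat.mod_lt m (show 0 < 200 by norm_num)
      have := Nat.div_add_mod m 200
      omega
    omega
  have ht : 12 ≤ t := by
    have : 2400/200 ≤ t := Nat.div_le_div_right hm
    simpa using this
  have h2 := aux_pow t ht
  have : (2:ℕ)^(t+4) = 16 * 2^t := by ring
  omega

lemma final_arith (m : ℕ) (hm : 20000 ≤ m) : 2 * (5*m+1)^6 * 2^(53*m) ≤ (3^15*31^6)^m := by
  set t := m/200 with htdef
  have h2 : 5*m+1 ≤ 2^(t+4) := aux_pow2 m (by omega)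
  have h3 : 2 * (5*m+1)^6 * 2^(53*m) ≤ 2^(6*t+25+53*m) := by
    calc 2 * (5*m+1)^6 * 2^(53*m) ≤ 2 * (2^(t+4))^6 * 2^(53*m) := by
          gcongr
      _ = 2^(6*t+25+53*m) := by ring
  refine le_trans h3 ?_
  have ht1 : 1 ≤ t := by
    have : 20000/200 ≤ t := Nat.div_le_div_right hm
    omega
  have ht2 : 200 * t ≤ m := by
    have := Nat.div_mul_le_self m 200
    omega
  have hexp : 3*(6*t+25+53*m) ≤ 160*m := by nlinarith
  have cube_big : (2:ℕ)^160 ≤ (3^15*31^6)^3 := by norm_num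
  have h4 : (2^(6*t+25+53*m))^3 ≤ ((3^15*31^6)^m)^3 := by
    calc (2^(6*t+25+53*m))^3 = 2^(3*(6*t+25+53*m)) := by rw [← pow_mul]; ring_nf
      _ ≤ 2^(160*m) := Nat.pow_le_pow_right (by norm_num) hexp
      _ = (2^160)^m := by rw [← pow_mul]
      _ ≤ ((3^15*31^6)^3)^m := Nat.pow_le_pow_left cube_big m
      _ = ((3^15*31^6)^m)^3 := by rw [← pow_mul, ← pow_mul, Nat.mul_comm 3 m]
  exact (Nat.pow_le_pow_iff_left (by norm_num)).mp h4



/-- step up for f i = choose n i * 2^(n-i) -/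
lemma mode_up (n i : ℕ) (h : i + 1 ≤ (n+1)/3) :
    n.choose i * 2^(n-i) ≤ n.choose (i+1) * 2^(n-(i+1)) := by
  have hb : 3*((n+1)/3) ≤ n+1 := Nat.mul_div_le (n+1) 3 |>.trans_eq (by ring) |>.trans (le_refl _)
  have h3 : 2*(i+1) ≤ n - i := by omega
  have hin : i < n := by omega
  have hid := Nat.choose_succ_right_eq n i
  have h2 : 2 * n.choose i ≤ n.choose (i+1) := by
    have : n.choose i * (2*(i+1)) ≤ n.choose i * (n - i) := Nat.mul_le_mul_left _ h3
    rw [← hid] at this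
    have := this
    nlinarith [Nat.choose_pos (le_of_lt hin)]
  have hpow : 2^(n-i) = 2 * 2^(n-(i+1)) := by
    have : n - i = (n - (i+1)) + 1 := by omega
    rw [this]; ring
  calc n.choose i * 2^(n-i) = 2 * n.choose i * 2^(n-(i+1)) := by rw [hpow]; ring
    _ ≤ n.choose (i+1) * 2^(n-(i+1)) := Nat.mul_le_mul_right _ h2

/-- step down -/
lemma mode_down (n i : ℕ) (h : (n+1)/3 ≤ i) :
    n.choose (i+1) * 2^(n-(i+1)) ≤ n.choose i * 2^(n-i) := by
  by_cases hin : n ≤ i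
  · have : n.choose (i+1) = 0 := Nat.choose_eq_zero_of_lt (by omega)
    simp [this]
  push_neg at hin
  have hb : n + 1 < 3*((n+1)/3) + 3 := by
    have := Nat.div_add_mod (n+1) 3
    have := Nat.mod_lt (n+1) (show 0 < 3 by norm_num)
    omega
  have h3 : n - i ≤ 2*(i+1) := by omega
  have hid := Nat.choose_succ_right_eq n i
  have h2 : n.choose (i+1) ≤ 2 * n.choose i := by
    have h4 : n.choose (i+1) * (i+1) ≤ 2 * n.choose i * (i+1) := by
      rw [hid]
      calc n.choose i * (n-i) ≤ n.choose i * (2*(i+1)) := Nat.mul_le_mul_left _ h3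
        _ = 2 * n.choose i * (i+1) := by ring
    exact Nat.le_of_mul_le_mul_right h4 (by omega)
  have hpow : 2^(n-i) = 2 * 2^(n-(i+1)) := by
    have : n - i = (n - (i+1)) + 1 := by omega
    rw [this]; ring
  calc n.choose (i+1) * 2^(n-(i+1)) ≤ 2 * n.choose i * 2^(n-(i+1)) := Nat.mul_le_mul_right _ h2
    _ = n.choose i * 2^(n-i) := by rw [hpow]; ring

lemma term_le_mode (n i : ℕ) :
    n.choose i * 2^(n-i) ≤ n.choose ((n+1)/3) * 2^(n-(n+1)/3) := by
  set b := (n+1)/3 with hb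
  rcases le_or_gt i b with hib | hib
  · -- i ≤ b : climb up
    obtain ⟨d, hd⟩ := Nat.le.dest hib
    clear hib
    induction d generalizing i with
    | zero => simp at hd; subst hd; exact le_refl _
    | succ d ih =>
      have h1 : i + 1 ≤ b := by omega
      exact le_trans (mode_up n i h1) (ih (i+1) (by omega))
  · obtain ⟨d, hd⟩ := Nat.le.dest (le_of_lt hib)
    clear hib
    subst hd
    induction d with
    | zero => simp
    | succ d ih =>
      have : b + (d+1) = (b+d) + 1 := by ring
      rw [this]
      exact le_trans (mode_down n (b+d) (by omega)) ih

lemma three_pow_le (n : ℕ) :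
    3^n ≤ (n+1) * (n.choose ((n+1)/3) * 2^(n-(n+1)/3)) := by
  have h := add_pow 1 2 n (R := ℕ)
  simp only [one_pow, one_mul] at h
  have h3 : (3:ℕ)^n = ∑ i ∈ range (n+1), 2^(n-i) * n.choose i := by
    rw [show (3:ℕ) = 1 + 2 by norm_num, h]
    simp
  rw [h3]
  calc ∑ i ∈ range (n+1), 2^(n-i) * n.choose i
      ≤ ∑ _i ∈ range (n+1), n.choose ((n+1)/3) * 2^(n-(n+1)/3) := by
        refine Finset.sum_le_sum fun i _ => ?_
        rw [Nat.mul_comm]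
        exact term_le_mode n i
    _ = (n+1) * (n.choose ((n+1)/3) * 2^(n-(n+1)/3)) := by
        rw [Finset.sum_const, Finset.card_range]; ring


lemma choose_mono_central (n : ℕ) : ∀ i j : ℕ, i ≤ j → 2*j ≤ n+1 → n.choose i ≤ n.choose j := by
  intro i j hij hj
  obtain ⟨d, hd⟩ := Nat.le.dest hij
  subst hd
  clear hij
  induction d with
  | zero => simp
  | succ d ih =>
    have step : n.choose (i+d) ≤ n.choose (i+d+1) := by
      have hle : 2*(i+d+1) ≤ n+1 := by omega
      have hin : i + d < n := by omega
      have hid := Nat.choose_succ_right_eq n (i+d)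
      have : n.choose (i+d) * (i+d+1) ≤ n.choose (i+d+1) * (i+d+1) := by
        rw [hid]
        exact Nat.mul_le_mul_left _ (by omega)
      exact Nat.le_of_mul_le_mul_right this (by omega)
    have := ih (by omega)
    calc n.choose i ≤ n.choose (i+d) := this
      _ ≤ n.choose (i + (d+1)) := by rw [show i + (d+1) = i+d+1 by ring]; exact step

lemma choose_central (n b a : ℕ) (h1 : b ≤ a) (h2 : b ≤ n - a) (ha : a ≤ n) :
    n.choose b ≤ n.choose a := by
  rcases le_or_gt (2*a) (n+1) with h | h
  · exact choose_mono_central n b a h1 h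
  · have hsymm : n.choose (n - a) = n.choose a := Nat.choose_symm ha
    rw [← hsymm]
    exact choose_mono_central n b (n-a) h2 (by omega)

/-- Key per-cardinality bound. -/
lemma key_bound (m k a W : ℕ) (hm : 20000 ≤ m) (hk : 100*k ≤ m)
    (hW : 31^m * W ≤ 2^(6*m) * 496^k)
    (hba : (5*m+1)/3 ≤ a) (hba' : (5*m+1)/3 ≤ 5*m - a) (han : a ≤ 5*m) :
    (5*m+1) * (4^m * W^2) ≤ (5*m).choose a := by
  set n := 5*m with hn
  set b := (n+1)/3 with hbdef
  have hbn : b ≤ n := by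
    have := Nat.div_le_self (n+1) 3
    omega
  have hb3 : 3*b ≤ n+1 := by
    have := Nat.mul_div_le (n+1) 3
    omega
  have hb3' : n - 1 ≤ 3*b := by
    have := Nat.div_add_mod (n+1) 3
    have := Nat.mod_lt (n+1) (show 0 < 3 by norm_num)
    omega
  have main : (n+1)^2 * (4^m * W^2) * 2^(n-b) ≤ 3^n := by
    have h31 : (31^m * W)^2 ≤ (2^(6*m) * 496^k)^2 := Nat.pow_le_pow_left hW 2
    have hred : (n+1)^2 * (4^m * ((31^m*W)^2)) * 2^(n-b) ≤ 3^n * 31^(2*m) →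
        (n+1)^2 * (4^m * W^2) * 2^(n-b) ≤ 3^n := by
      intro hh
      have heq : (n+1)^2 * (4^m * ((31^m*W)^2)) * 2^(n-b)
          = ((n+1)^2 * (4^m * W^2) * 2^(n-b)) * 31^(2*m) := by
        rw [mul_pow, ← pow_mul, mul_comm m 2]; ring
      rw [heq] at hh
      have h31pos : 0 < 31^(2*m) := by positivity
      exact Nat.le_of_mul_le_mul_right hh h31pos
    apply hred
    have hstep : (n+1)^2 * (4^m * ((31^m*W)^2)) * 2^(n-b)
        ≤ (n+1)^2 * (4^m * ((2^(6*m) * 496^k)^2)) * 2^(n-b) := by gcongr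
    refine le_trans hstep ?_
    -- atoms
    set y := (2:ℕ)^m with hy
    set u := (2:ℕ)^(n-b) with hu
    set q := (496:ℕ)^k with hq
    have e4 : (4:ℕ)^m = y^2 := by rw [hy, ← pow_mul, mul_comm m 2, pow_mul]; norm_num
    have e6 : (2:ℕ)^(6*m) = y^6 := by rw [hy, ← pow_mul, mul_comm 6 m]
    have hq6 : q^6 ≤ y := by
      rw [hq, hy, ← pow_mul]
      calc (496:ℕ)^(k*6) ≤ (2^9)^(k*6) := Nat.pow_le_pow_left (by norm_num) _
        _ = 2^(9*(k*6)) := by rw [← pow_mul]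
        _ ≤ 2^m := Nat.pow_le_pow_right (by norm_num) (by omega)
    have hnb : 3*(n-b) ≤ 10*m+1 := by omega
    have hu3 : u^3 ≤ 2 * y^10 := by
      rw [hu, hy, ← pow_mul, ← pow_mul]
      calc (2:ℕ)^((n-b)*3) ≤ 2^(10*m+1) := Nat.pow_le_pow_right (by norm_num) (by omega)
        _ = 2 * 2^(m*10) := by rw [mul_comm 10 m, pow_add, pow_mul]; ring
    rw [e4, e6]
    have hcube : ((n+1)^2 * (y^2 * ((y^6 * q)^2)) * u)^3 ≤ (3^n * 31^(2*m))^3 := by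
      calc ((n+1)^2 * (y^2 * ((y^6 * q)^2)) * u)^3
          = (n+1)^6 * y^42 * (q^6 * u^3) := by ring
        _ ≤ (n+1)^6 * y^42 * (y * (2*y^10)) := by
            refine Nat.mul_le_mul_left _ ?_
            exact Nat.mul_le_mul hq6 hu3
        _ = 2 * (5*m+1)^6 * y^53 := by rw [hn]; ring
        _ = 2 * (5*m+1)^6 * 2^(53*m) := by rw [hy, ← pow_mul, mul_comm m 53]
        _ ≤ (3^15*31^6)^m := final_arith m hm
        _ = (3^n * 31^(2*m))^3 := by
            rw [hn, mul_pow, mul_pow, ← pow_mul, ← pow_mul, ← pow_mul, ← pow_mul]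
            ring_nf
    exact (Nat.pow_le_pow_iff_left (show 3 ≠ 0 by norm_num)).mp hcube
  -- now use 3^n ≤ (n+1) * (choose n b * 2^(n-b))
  have h3 := three_pow_le n
  have hfinal : (n+1) * (4^m * W^2) * ((n+1) * 2^(n-b)) ≤ n.choose b * ((n+1) * 2^(n-b)) := by
    calc (n+1) * (4^m * W^2) * ((n+1) * 2^(n-b)) = (n+1)^2 * (4^m * W^2) * 2^(n-b) := by ring
      _ ≤ 3^n := main
      _ ≤ (n+1) * (n.choose b * 2^(n-b)) := h3
      _ = n.choose b * ((n+1) * 2^(n-b)) := by ring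
  have hb_le : (n+1) * (4^m * W^2) ≤ n.choose b :=
    Nat.le_of_mul_le_mul_right hfinal (by positivity)
  exact le_trans hb_le (choose_central n b a hba hba' han)



set_option linter.unusedSectionVars false



variable {V : Type} [Fintype V] [DecidableEq V]

/-- Count of equivalences respecting a subset: at most a! (n-a)!. -/
lemma card_equiv_fiber {T : Type} [Fintype T] [DecidableEq T] (A : Finset V) (S : Finset T) :
    Fintype.card {σ : V ≃ T // ∀ v, v ∈ A ↔ σ v ∈ S}
      ≤ (A.card).factorial * (Fintype.card V - A.card).factorial := by
  classical
  set F : {σ : V ≃ T // ∀ v, v ∈ A ↔ σ v ∈ S} →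
      ({v // v ∈ A} ≃ {t // t ∈ S}) × ({v // ¬ v ∈ A} ≃ {t // ¬ t ∈ S}) :=
    fun σ => (σ.1.subtypeEquiv (fun v => σ.2 v),
              σ.1.subtypeEquiv (fun v => not_congr (σ.2 v))) with hF
  have hinj : Function.Injective F := by
    intro σ τ h
    rw [Prod.ext_iff] at h
    apply Subtype.ext
    apply Equiv.ext
    intro v
    by_cases hv : v ∈ A
    · have := congrArg (fun e => ((e ⟨v, hv⟩ : {t // t ∈ S}) : T)) h.1
      simpa [hF] using this
    · have := congrArg (fun e => ((e ⟨v, hv⟩ : {t // ¬ t ∈ S}) : T)) h.2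
      simpa [hF] using this
  refine le_trans (Fintype.card_le_of_injective F hinj) ?_
  rw [Fintype.card_prod]
  have h1 : Fintype.card ({v // v ∈ A} ≃ {t // t ∈ S}) ≤ (A.card).factorial := by
    rcases isEmpty_or_nonempty ({v // v ∈ A} ≃ {t // t ∈ S}) with he | he
    · simp [Fintype.card_eq_zero]
    · obtain ⟨e⟩ := he
      rw [Fintype.card_equiv e, Fintype.card_coe]
  have h2 : Fintype.card ({v // ¬ v ∈ A} ≃ {t // ¬ t ∈ S}) ≤ (Fintype.card V - A.card).factorial := by
    rcases isEmpty_or_nonempty ({v // ¬ v ∈ A} ≃ {t // ¬ t ∈ S}) with he | he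
    · simp [Fintype.card_eq_zero]
    · obtain ⟨e⟩ := he
      rw [Fintype.card_equiv e, Fintype.card_subtype_compl, Fintype.card_coe]
  exact Nat.mul_le_mul h1 h2

variable {m : ℕ}

def patF (σ : V ≃ Fin m × ZMod 5) (A : Finset V) : Fin m → Finset (ZMod 5) :=
  fun i => univ.filter (fun z => σ.symm (i, z) ∈ A)

def slots (P : Fin m → Finset (ZMod 5)) : Finset (Fin m × ZMod 5) :=
  univ.filter (fun t => t.2 ∈ P t.1)

lemma patF_eq_iff (σ : V ≃ Fin m × ZMod 5) (A : Finset V) (P : Fin m → Finset (ZMod 5)) :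
    patF σ A = P ↔ ∀ v, v ∈ A ↔ σ v ∈ slots P := by
  constructor
  · intro h v
    have hv : σ.symm ((σ v).1, (σ v).2) = v := by
      rw [Prod.mk.eta, Equiv.symm_apply_apply]
    have := congrFun h (σ v).1
    rw [funext_iff] at h
    simp only [slots, mem_filter, mem_univ, true_and]
    rw [← h (σ v).1]
    simp only [patF, mem_filter, mem_univ, true_and, hv]
  · intro h
    funext i
    ext z
    simp only [patF, mem_filter, mem_univ, true_and]
    rw [h (σ.symm (i, z))]
    simp [slots, Equiv.apply_symm_apply]

def mixedF (P : Fin m → Finset (ZMod 5)) : Finset (Fin m) :=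
  univ.filter (fun i => P i ≠ ∅ ∧ P i ≠ univ)

lemma missed_eq_mixed (σ : V ≃ Fin m × ZMod 5) (A : Finset V) :
    missed σ A = mixedF (patF σ A) := by
  ext i
  simp only [missed, mixedF, mem_filter, mem_univ, true_and]
  constructor
  · rintro ⟨⟨u, hu, hui⟩, ⟨v, hv, hvi⟩⟩
    rw [Finset.mem_compl] at hv
    constructor
    · apply Finset.Nonempty.ne_empty
      refine ⟨(σ u).2, ?_⟩
      simp only [patF, mem_filter, mem_univ, true_and]
      rw [← hui, Prod.mk.eta, Equiv.symm_apply_apply]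
      exact hu
    · intro hP
      have : (σ v).2 ∈ patF σ A i := hP ▸ mem_univ _
      simp only [patF, mem_filter, mem_univ, true_and] at this
      rw [← hvi, Prod.mk.eta, Equiv.symm_apply_apply] at this
      exact hv this
  · rintro ⟨h1, h2⟩
    obtain ⟨z, hz⟩ := Finset.nonempty_iff_ne_empty.mpr h1
    simp only [patF, mem_filter, mem_univ, true_and] at hz
    have h2' : ∃ z', z' ∉ patF σ A i := by
      by_contra hc
      push_neg at hc
      exact h2 (Finset.eq_univ_iff_forall.mpr hc)
    obtain ⟨z', hz'⟩ := h2'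
    simp only [patF, mem_filter, mem_univ, true_and] at hz'
    refine ⟨⟨σ.symm (i, z), hz, by simp⟩, ⟨σ.symm (i, z'), ?_, by simp⟩⟩
    rw [Finset.mem_compl]
    exact hz'

lemma card_pat_fiber (A : Finset V) (P : Fin m → Finset (ZMod 5)) :
    (univ.filter (fun σ : V ≃ Fin m × ZMod 5 => patF σ A = P)).card
      ≤ (A.card).factorial * (Fintype.card V - A.card).factorial := by
  classical
  rw [← Fintype.card_subtype]
  refine le_trans (Fintype.card_le_of_injective
    (fun σ => (⟨σ.1, (patF_eq_iff σ.1 A P).mp σ.2⟩ :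
      {σ : V ≃ Fin m × ZMod 5 // ∀ v, v ∈ A ↔ σ v ∈ slots P})) ?_)
    (card_equiv_fiber A (slots P))
  intro σ τ h
  have := congrArg Subtype.val h
  exact Subtype.ext this


/-- number of bad bijections for a fixed cut, bounded by patterns times factorials. -/
lemma badF_bound (A : Finset V) (k : ℕ) :
    (univ.filter (fun σ : V ≃ Fin m × ZMod 5 => (missed σ A).card ≤ k)).card
      ≤ (univ.filter (fun P : Fin m → Finset (ZMod 5) => (mixedF P).card ≤ k)).card
        * ((A.card).factorial * (Fintype.card V - A.card).factorial) := by
  classical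
  have hsub : (univ.filter (fun σ : V ≃ Fin m × ZMod 5 => (missed σ A).card ≤ k))
      ⊆ (univ.filter (fun P : Fin m → Finset (ZMod 5) => (mixedF P).card ≤ k)).biUnion
          (fun P => univ.filter (fun σ : V ≃ Fin m × ZMod 5 => patF σ A = P)) := by
    intro σ hσ
    rw [mem_filter] at hσ
    rw [mem_biUnion]
    refine ⟨patF σ A, ?_, ?_⟩
    · rw [mem_filter]
      refine ⟨mem_univ _, ?_⟩
      rw [← missed_eq_mixed]
      exact hσ.2
    · simp
  refine le_trans (Finset.card_le_card hsub) ?_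
  refine le_trans (Finset.card_biUnion_le) ?_
  refine le_trans (Finset.sum_le_sum (fun P _ => card_pat_fiber A P)) ?_
  rw [Finset.sum_const, smul_eq_mul]

/-- pattern count bound. -/
lemma patcount_bound (k : ℕ) (hk : k ≤ m) :
    31^m * (univ.filter (fun P : Fin m → Finset (ZMod 5) => (mixedF P).card ≤ k)).card
      ≤ 2^(6*m) * 496^k := by
  classical
  -- fiber over a fixed mixed set
  have fiber : ∀ M : Finset (Fin m),
      (univ.filter (fun P : Fin m → Finset (ZMod 5) => mixedF P = M)).card
        ≤ 32^M.card * 2^(m - M.card) := by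
    intro M
    rw [← Fintype.card_subtype]
    have hinj : Function.Injective
        (fun P : {P : Fin m → Finset (ZMod 5) // mixedF P = M} =>
          ((fun i : {i // i ∈ M} => P.1 i.1, fun i : {i // i ∈ Mᶜ} => decide (P.1 i.1 = univ)) :
            ({i // i ∈ M} → Finset (ZMod 5)) × ({i // i ∈ Mᶜ} → Bool))) := by
      intro P Q h
      rw [Prod.ext_iff] at h
      apply Subtype.ext
      funext i
      by_cases hi : i ∈ M
      · exact congrFun h.1 ⟨i, hi⟩
      · have h2 := congrFun h.2 ⟨i, Finset.mem_compl.mpr hi⟩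
        simp only [decide_eq_decide] at h2
        have hP : ¬ (P.1 i ≠ ∅ ∧ P.1 i ≠ univ) := by
          intro hc
          apply hi
          rw [← P.2]
          simp only [mixedF, mem_filter, mem_univ, true_and]
          exact hc
        have hQ : ¬ (Q.1 i ≠ ∅ ∧ Q.1 i ≠ univ) := by
          intro hc
          apply hi
          rw [← Q.2]
          simp only [mixedF, mem_filter, mem_univ, true_and]
          exact hc
        push_neg at hP hQ
        by_cases hu : P.1 i = univ
        · rw [hu, (h2.mp hu)]
        · have hP0 : P.1 i = ∅ := by
            by_contra hne; exact hu (hP (Finset.nonempty_iff_ne_empty.mpr hne))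
          have hQ0 : Q.1 i = ∅ := by
            by_cases hu' : Q.1 i = univ
            · exact absurd (h2.mpr hu') hu
            · by_contra hne; exact hu' (hQ (Finset.nonempty_iff_ne_empty.mpr hne))
          rw [hP0, hQ0]
    refine le_trans (Fintype.card_le_of_injective _ hinj) ?_
    rw [Fintype.card_prod, Fintype.card_fun, Fintype.card_fun]
    have c32 : Fintype.card (Finset (ZMod 5)) = 32 := by
      rw [Fintype.card_finset]
      norm_num
    rw [c32, Fintype.card_coe, Fintype.card_coe, Fintype.card_bool, Finset.card_compl,
      Fintype.card_fin]
  -- subset of double biUnion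
  have hsub : (univ.filter (fun P : Fin m → Finset (ZMod 5) => (mixedF P).card ≤ k))
      ⊆ (range (k+1)).biUnion (fun t => (powersetCard t univ).biUnion
          (fun M => univ.filter (fun P : Fin m → Finset (ZMod 5) => mixedF P = M))) := by
    intro P hP
    rw [mem_filter] at hP
    rw [mem_biUnion]
    refine ⟨(mixedF P).card, by rw [mem_range]; omega, ?_⟩
    rw [mem_biUnion]
    exact ⟨mixedF P, Finset.mem_powersetCard_univ.mpr rfl, by simp⟩
  have hcount : (univ.filter (fun P : Fin m → Finset (ZMod 5) => (mixedF P).card ≤ k)).card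
      ≤ ∑ t ∈ range (k+1), (m.choose t) * (32^t * 2^(m-t)) := by
    refine le_trans (Finset.card_le_card hsub) ?_
    refine le_trans (Finset.card_biUnion_le) ?_
    refine Finset.sum_le_sum (fun t _ => ?_)
    refine le_trans (Finset.card_biUnion_le) ?_
    have : ∀ M ∈ powersetCard t (univ : Finset (Fin m)),
        (univ.filter (fun P : Fin m → Finset (ZMod 5) => mixedF P = M)).card
          ≤ 32^t * 2^(m-t) := by
      intro M hM
      have hMc : M.card = t := Finset.mem_powersetCard_univ.mp hM
      rw [← hMc]
      exact fiber M
    refine le_trans (Finset.sum_le_sum this) ?_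
    rw [Finset.sum_const, smul_eq_mul, Finset.card_powersetCard, Finset.card_univ,
      Fintype.card_fin]
  calc 31^m * (univ.filter (fun P : Fin m → Finset (ZMod 5) => (mixedF P).card ≤ k)).card
      ≤ 31^m * ∑ t ∈ range (k+1), (m.choose t) * (32^t * 2^(m-t)) := Nat.mul_le_mul_left _ hcount
    _ = ∑ t ∈ range (k+1), (m.choose t) * (31^m * (32^t * 2^(m-t))) := by
        rw [Finset.mul_sum]
        refine Finset.sum_congr rfl (fun t _ => by ring)
    _ ≤ ∑ t ∈ range (k+1), (m.choose t) * (2^m * (496^k * 31^(m-t))) := by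
        refine Finset.sum_le_sum (fun t ht => ?_)
        rw [mem_range] at ht
        have htm : t ≤ m := by omega
        refine Nat.mul_le_mul_left _ ?_
        have he : 31^m * (32^t * 2^(m-t)) = 2^m * (496^t * 31^(m-t)) := by
          have e31 : (31:ℕ)^m = 31^t * 31^(m-t) := by rw [← pow_add]; congr 1; omega
          have e2 : (2:ℕ)^m = 2^t * 2^(m-t) := by rw [← pow_add]; congr 1; omega
          have e32 : (32:ℕ)^t = 2^t * 16^t := by
            rw [← Nat.mul_pow]
          have e496 : (496:ℕ)^t = 16^t * 31^t := by rw [← Nat.mul_pow]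
          rw [e31, e32, e496, e2]
          ring
        rw [he]
        refine Nat.mul_le_mul_left _ ?_
        refine Nat.mul_le_mul_right _ ?_
        exact Nat.pow_le_pow_right (by norm_num) (by omega)
    _ = 2^m * 496^k * ∑ t ∈ range (k+1), (m.choose t) * 31^(m-t) := by
        rw [Finset.mul_sum]
        refine Finset.sum_congr rfl (fun t _ => by ring)
    _ ≤ 2^m * 496^k * ∑ t ∈ range (m+1), (m.choose t) * 31^(m-t) := by
        refine Nat.mul_le_mul_left _ ?_
        refine Finset.sum_le_sum_of_subset ?_
        exact Finset.range_subset_range.mpr (by omega)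
    _ = 2^m * 496^k * 32^m := by
        congr 1
        have h := add_pow 1 31 m (R := ℕ)
        simp only [one_pow, one_mul] at h
        have : ((1:ℕ) + 31)^m = 32^m := by norm_num
        rw [← this, h]
        refine Finset.sum_congr rfl (fun t _ => by ring_nf; simp)
    _ = 2^(6*m) * 496^k := by
        have : (32:ℕ)^m = 2^(5*m) := by
          rw [show (32:ℕ) = 2^5 by norm_num, ← pow_mul]
        rw [this]
        rw [show (2:ℕ)^m * 496^k * 2^(5*m) = 2^m * 2^(5*m) * 496^k by ring,
          ← pow_add]
        congr 2
        omega


lemma sum_subsets {V : Type} [Fintype V] [DecidableEq V] :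
    ∑ A : Finset V, ((A.card).factorial * ((Fintype.card V) - A.card).factorial)
      = ((Fintype.card V) + 1) * (Fintype.card V).factorial := by
  classical
  have h0 : ∑ A : Finset V, ((A.card).factorial * ((Fintype.card V) - A.card).factorial)
      = ∑ A ∈ (univ : Finset V).powerset,
          ((A.card).factorial * ((Fintype.card V) - A.card).factorial) := by
    rw [Finset.powerset_univ]
  rw [h0, Finset.sum_powerset]
  have h1 : ∀ j ∈ range ((univ : Finset V).card + 1),
      ∑ A ∈ powersetCard j (univ : Finset V),
          ((A.card).factorial * ((Fintype.card V) - A.card).factorial)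
        = (Fintype.card V).factorial := by
    intro j hj
    rw [mem_range, Finset.card_univ] at hj
    have h2 : ∀ A ∈ powersetCard j (univ : Finset V),
        ((A.card).factorial * ((Fintype.card V) - A.card).factorial)
          = (j.factorial * ((Fintype.card V) - j).factorial) := by
      intro A hA
      rw [Finset.mem_powersetCard_univ.mp hA]
    rw [Finset.sum_congr rfl h2, Finset.sum_const, smul_eq_mul, Finset.card_powersetCard,
      Finset.card_univ, ← mul_assoc]
    exact Nat.choose_mul_factorial_mul_factorial (by omega)
  rw [Finset.sum_congr rfl h1, Finset.sum_const, smul_eq_mul, Finset.card_range,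
    Finset.card_univ]

lemma master {V : Type} [Fintype V] [DecidableEq V] {m k : ℕ}
    (hcard : Fintype.card V = 5*m) (hm : 20000 ≤ m) (hk : 100*k ≤ m) :
    Nat.card {p : (V ≃ Fin m × ZMod 5) × (V ≃ Fin m × ZMod 5) //
      ∃ A : Finset V, (5*m ≤ 3*A.card ∧ 3*A.card ≤ 2*(5*m)) ∧
        (missed p.1 A).card ≤ k ∧ (missed p.2 A).card ≤ k} * 4^m
      ≤ ((5*m).factorial)^2 := by
  classical
  rw [Nat.card_eq_fintype_card, Fintype.card_subtype]
  set W := (univ.filter (fun P : Fin m → Finset (ZMod 5) => (mixedF P).card ≤ k)).card with hWdef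
  have hW : 31^m * W ≤ 2^(6*m) * 496^k := patcount_bound k (by omega)
  set 𝒜 := (univ : Finset (Finset V)).filter
    (fun A => 5*m ≤ 3*A.card ∧ 3*A.card ≤ 2*(5*m)) with h𝒜
  set bad : Finset V → Finset (V ≃ Fin m × ZMod 5) :=
    (fun A => univ.filter (fun σ : V ≃ Fin m × ZMod 5 => (missed σ A).card ≤ k)) with hbad
  have hsub : (univ.filter (fun p : (V ≃ Fin m × ZMod 5) × (V ≃ Fin m × ZMod 5) =>
      ∃ A : Finset V, (5*m ≤ 3*A.card ∧ 3*A.card ≤ 2*(5*m)) ∧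
        (missed p.1 A).card ≤ k ∧ (missed p.2 A).card ≤ k))
      ⊆ 𝒜.biUnion (fun A => (bad A) ×ˢ (bad A)) := by
    intro p hp
    rw [mem_filter] at hp
    obtain ⟨-, A, hA, h1, h2⟩ := hp
    rw [mem_biUnion]
    refine ⟨A, ?_, ?_⟩
    · rw [h𝒜, mem_filter]
      exact ⟨mem_univ _, hA⟩
    · rw [Finset.mem_product]
      constructor
      · rw [hbad, mem_filter]; exact ⟨mem_univ _, h1⟩
      · rw [hbad, mem_filter]; exact ⟨mem_univ _, h2⟩
  -- per A bound
  have perA : ∀ A ∈ 𝒜, (5*m+1) * (4^m * ((bad A).card)^2)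
      ≤ (5*m).factorial * ((A.card).factorial * (5*m - A.card).factorial) := by
    intro A hA
    rw [h𝒜, mem_filter] at hA
    obtain ⟨-, hA1, hA2⟩ := hA
    have han : A.card ≤ 5*m := by
      have := Finset.card_le_univ A
      omega
    have hba : (5*m+1)/3 ≤ A.card := by omega
    have hba' : (5*m+1)/3 ≤ 5*m - A.card := by omega
    have hkey := key_bound m k A.card W hm hk hW hba hba' han
    have hBA : (bad A).card ≤ W * ((A.card).factorial * (5*m - A.card).factorial) := by
      have := badF_bound (m := m) A k
      rw [hcard] at this
      exact this
    set fa := (A.card).factorial * (5*m - A.card).factorial with hfa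
    calc (5*m+1) * (4^m * ((bad A).card)^2)
        ≤ (5*m+1) * (4^m * (W * fa)^2) := by gcongr
      _ = ((5*m+1) * (4^m * W^2)) * (fa * fa) := by ring
      _ ≤ ((5*m).choose A.card) * (fa * fa) := Nat.mul_le_mul_right _ hkey
      _ = ((5*m).choose A.card * (A.card).factorial * ((5*m) - A.card).factorial) * fa := by
          rw [hfa]; ring
      _ = (5*m).factorial * fa := by rw [Nat.choose_mul_factorial_mul_factorial han]
  -- sum
  have hsum : (5*m+1) * ((univ.filter (fun p : (V ≃ Fin m × ZMod 5) × (V ≃ Fin m × ZMod 5) =>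
      ∃ A : Finset V, (5*m ≤ 3*A.card ∧ 3*A.card ≤ 2*(5*m)) ∧
        (missed p.1 A).card ≤ k ∧ (missed p.2 A).card ≤ k)).card * 4^m)
      ≤ (5*m+1) * ((5*m).factorial)^2 := by
    calc (5*m+1) * ((univ.filter (fun p : (V ≃ Fin m × ZMod 5) × (V ≃ Fin m × ZMod 5) =>
      ∃ A : Finset V, (5*m ≤ 3*A.card ∧ 3*A.card ≤ 2*(5*m)) ∧
        (missed p.1 A).card ≤ k ∧ (missed p.2 A).card ≤ k)).card * 4^m)
        ≤ (5*m+1) * ((𝒜.biUnion (fun A => (bad A) ×ˢ (bad A))).card * 4^m) := by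
          have := Finset.card_le_card hsub
          gcongr
      _ ≤ (5*m+1) * ((∑ A ∈ 𝒜, ((bad A) ×ˢ (bad A)).card) * 4^m) := by
          have : (𝒜.biUnion (fun A => (bad A) ×ˢ (bad A))).card
              ≤ ∑ A ∈ 𝒜, ((bad A) ×ˢ (bad A)).card := Finset.card_biUnion_le
          gcongr
      _ = ∑ A ∈ 𝒜, (5*m+1) * (4^m * ((bad A).card)^2) := by
          rw [Finset.sum_mul, Finset.mul_sum]
          refine Finset.sum_congr rfl (fun A _ => ?_)
          rw [Finset.card_product]
          ring
      _ ≤ ∑ A ∈ 𝒜, (5*m).factorial * ((A.card).factorial * (5*m - A.card).factorial) :=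
          Finset.sum_le_sum perA
      _ ≤ ∑ A : Finset V, (5*m).factorial * ((A.card).factorial * (5*m - A.card).factorial) :=
          Finset.sum_le_sum_of_subset (Finset.filter_subset _ _)
      _ = (5*m).factorial * ∑ A : Finset V, ((A.card).factorial * (5*m - A.card).factorial) := by
          rw [Finset.mul_sum]
      _ = (5*m).factorial * ((5*m + 1) * (5*m).factorial) := by
          have h := sum_subsets (V := V)
          rw [hcard] at h
          rw [h]
      _ = (5*m+1) * ((5*m).factorial)^2 := by ring
  exact Nat.le_of_mul_le_mul_left hsum (by omega)





abbrev Rel {m : ℕ} (p q : Fin m × ZMod 5) : Prop :=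
  p.1 = q.1 ∧ (p.2 = q.2 + 1 ∨ q.2 = p.2 + 1)

variable {V : Type} [Fintype V] [DecidableEq V] {m : ℕ}

lemma cycleW_apply (σ : V ≃ Fin m × ZMod 5) (u v : V) :
    cycleW σ u v = if Rel (σ u) (σ v) then 1 else 0 := rfl

lemma cycleW_eq_iff' (σ τ : V ≃ Fin m × ZMod 5) (h : cycleW σ = cycleW τ) (u v : V) :
    Rel (σ u) (σ v) ↔ Rel (τ u) (τ v) := by
  have := congrFun (congrFun h u) v
  rw [cycleW_apply, cycleW_apply] at this
  by_cases h1 : Rel (σ u) (σ v) <;> by_cases h2 : Rel (τ u) (τ v)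
  · exact iff_of_true h1 h2
  · exfalso; rw [if_pos h1, if_neg h2] at this; norm_num at this
  · exfalso; rw [if_neg h1, if_pos h2] at this; norm_num at this
  · exact iff_of_false h1 h2

lemma rel_fst (e : (Fin m × ZMod 5) ≃ (Fin m × ZMod 5))
    (he : ∀ p q, Rel (e p) (e q) ↔ Rel p q) (i : Fin m) (z : ZMod 5) :
    (e (i, z)).1 = (e (i, 0)).1 := by
  have step : ∀ w : ZMod 5, (e (i, w)).1 = (e (i, w+1)).1 := by
    intro w
    have hR : Rel (i, w) (i, w+1) := ⟨rfl, Or.inr rfl⟩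
    exact ((he _ _).mpr hR).1
  have hz : ∀ z : ZMod 5, z = 0 ∨ z = 1 ∨ z = 2 ∨ z = 3 ∨ z = 4 := by decide
  have e01 := step 0
  have e12 := step 1
  have e23 := step 2
  have e34 := step 3
  have n1 : (0:ZMod 5) + 1 = 1 := by decide
  have n2 : (1:ZMod 5) + 1 = 2 := by decide
  have n3 : (2:ZMod 5) + 1 = 3 := by decide
  have n4 : (3:ZMod 5) + 1 = 4 := by decide
  rw [n1] at e01
  rw [n2] at e12
  rw [n3] at e23
  rw [n4] at e34
  rcases hz z with rfl | rfl | rfl | rfl | rfl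
  · rfl
  · rw [← e01]
  · rw [← e12, ← e01]
  · rw [← e23, ← e12, ← e01]
  · rw [← e34, ← e23, ← e12, ← e01]

lemma missed_card_eq (σ τ : V ≃ Fin m × ZMod 5) (h : cycleW σ = cycleW τ) (A : Finset V) :
    (missed τ A).card = (missed σ A).card := by
  classical
  set e := σ.symm.trans τ with hedef
  have he : ∀ p q, Rel (e p) (e q) ↔ Rel p q := by
    intro p q
    have h2 := cycleW_eq_iff' σ τ h (σ.symm p) (σ.symm q)
    simp only [hedef, Equiv.trans_apply, Equiv.apply_symm_apply] at h2 ⊢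
    exact h2.symm
  have hesymm : ∀ p q, Rel (e.symm p) (e.symm q) ↔ Rel p q := by
    intro p q
    have := he (e.symm p) (e.symm q)
    simp only [Equiv.apply_symm_apply] at this
    exact this.symm
  set π : Fin m → Fin m := fun i => (e (i, 0)).1 with hπ
  have heτ : ∀ v, τ v = e (σ v) := by
    intro v
    simp [hedef]
  have hfst : ∀ v : V, (τ v).1 = π (σ v).1 := by
    intro v
    rw [heτ v, hπ]
    have h5 := rel_fst e he (σ v).1 (σ v).2
    rw [Prod.mk.eta] at h5
    exact h5
  have hππ' : ∀ i, (e.symm ((π i), 0)).1 = i := by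
    intro i
    have h1 : (e.symm ((π i), 0)).1 = (e.symm ((π i), (e (i,0)).2)).1 :=
      (rel_fst e.symm hesymm (π i) ((e (i,0)).2)).symm
    have h2 : (((π i) : Fin m), (e (i,0)).2) = e (i, 0) := by
      rw [hπ]
    rw [h1, h2, Equiv.symm_apply_apply]
  have hinj : Function.Injective π := by
    intro i j hij
    have := hππ' i
    rw [hij, hππ' j] at this
    exact this.symm
  have him : missed τ A = (missed σ A).image π := by
    ext i
    simp only [missed, mem_filter, mem_univ, true_and, Finset.mem_image]
    constructor
    · rintro ⟨⟨u, hu, hui⟩, ⟨v, hv, hvi⟩⟩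
      refine ⟨(σ u).1, ⟨⟨u, hu, rfl⟩, ⟨v, hv, ?_⟩⟩, ?_⟩
      · apply hinj
        rw [← hfst v, ← hfst u, hui, hvi]
      · rw [← hfst u, hui]
    · rintro ⟨j, ⟨⟨u, hu, hui⟩, ⟨v, hv, hvi⟩⟩, rfl⟩
      exact ⟨⟨u, hu, by rw [hfst u, hui]⟩, ⟨v, hv, by rw [hfst v, hvi]⟩⟩
  rw [him, Finset.card_image_of_injective _ hinj]

/-- the symmetry group (as a subtype). -/
def GC (m : ℕ) : Type :=
  {e : (Fin m × ZMod 5) ≃ (Fin m × ZMod 5) // ∀ p q, Rel (e p) (e q) ↔ Rel p q}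

instance : Finite (GC m) := by
  unfold GC
  infer_instance

instance : Nonempty (GC m) :=
  ⟨⟨Equiv.refl _, fun p q => Iff.rfl⟩⟩

lemma cycleW_trans (σ : V ≃ Fin m × ZMod 5) (e : GC m) :
    cycleW (σ.trans e.1) = cycleW σ := by
  funext u v
  rw [cycleW_apply, cycleW_apply]
  refine if_congr ?_ rfl rfl
  simp only [Equiv.trans_apply]
  exact e.2 (σ u) (σ v)

lemma mem_gc (s σ : V ≃ Fin m × ZMod 5) (h : cycleW s = cycleW σ) :
    ∀ p q, Rel ((s.symm.trans σ) p) ((s.symm.trans σ) q) ↔ Rel p q := by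
  intro p q
  have h2 := cycleW_eq_iff' s σ h (s.symm p) (s.symm q)
  simp only [Equiv.trans_apply, Equiv.apply_symm_apply] at h2 ⊢
  exact h2.symm

noncomputable def pick (w : V → V → ℝ) (h : ∃ σ : V ≃ Fin m × ZMod 5, w = cycleW σ) :
    V ≃ Fin m × ZMod 5 := h.choose

lemma pick_spec (w : V → V → ℝ) (h : ∃ σ : V ≃ Fin m × ZMod 5, w = cycleW σ) :
    cycleW (pick w h) = w := h.choose_spec.symm

/-- Injection 1: every bijection is (its graph, symmetry element). -/
lemma card_equiv_le :
    Nat.card (V ≃ Fin m × ZMod 5)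
      ≤ Nat.card {w : V → V → ℝ // ∃ σ : V ≃ Fin m × ZMod 5, w = cycleW σ} * Nat.card (GC m) := by
  classical
  rw [← Nat.card_prod]
  set Φ : (V ≃ Fin m × ZMod 5) →
      ({w : V → V → ℝ // ∃ σ : V ≃ Fin m × ZMod 5, w = cycleW σ} × GC m) :=
    fun σ => (⟨cycleW σ, σ, rfl⟩,
      ⟨(pick (cycleW σ) ⟨σ, rfl⟩).symm.trans σ, mem_gc _ σ (pick_spec _ _)⟩) with hΦ
  have hfin : Finite ({w : V → V → ℝ // ∃ σ : V ≃ Fin m × ZMod 5, w = cycleW σ} × GC m) := by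
    have hfin1 : Finite {w : V → V → ℝ // ∃ σ : V ≃ Fin m × ZMod 5, w = cycleW σ} := by
      have h : {w : V → V → ℝ | ∃ σ : V ≃ Fin m × ZMod 5, w = cycleW σ}
          = Set.range (fun σ : V ≃ Fin m × ZMod 5 => cycleW σ) := by
        ext w
        simp [Set.mem_range, eq_comm]
      have h2 : ({w : V → V → ℝ | ∃ σ : V ≃ Fin m × ZMod 5, w = cycleW σ}).Finite := by
        rw [h]
        exact Set.finite_range _
      exact h2.to_subtype
    infer_instance
  refine Nat.card_le_card_of_injective Φ ?_
  have hleft : Function.LeftInverse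
      (fun p : ({w : V → V → ℝ // ∃ σ : V ≃ Fin m × ZMod 5, w = cycleW σ} × GC m) =>
        (pick p.1.1 p.1.2).trans p.2.1) Φ := by
    intro σ
    apply Equiv.ext
    intro v
    simp [hΦ]
  exact hleft.injective



lemma pick_eq (w w' : V → V → ℝ) (hww : w = w')
    (h : ∃ σ : V ≃ Fin m × ZMod 5, w = cycleW σ)
    (h' : ∃ σ : V ≃ Fin m × ZMod 5, w' = cycleW σ) : pick w h = pick w' h' := by
  subst hww
  rfl

lemma trans_right_cancel (s s' : V ≃ Fin m × ZMod 5) (hss : s = s')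
    (e e' : (Fin m × ZMod 5) ≃ (Fin m × ZMod 5)) (h : s.trans e = s'.trans e') : e = e' := by
  subst hss
  apply Equiv.ext
  intro t
  have h2 := congrFun (congrArg (fun E : V ≃ Fin m × ZMod 5 => (E : V → Fin m × ZMod 5)) h)
    (s.symm t)
  simpa using h2

lemma missed_pick (w : V → V → ℝ) (h : ∃ σ' : V ≃ Fin m × ZMod 5, w = cycleW σ') (e : GC m)
    (σ : V ≃ Fin m × ZMod 5) (hq : w = cycleW σ) (A : Finset V) :
    (missed ((pick w h).trans e.1) A).card = (missed σ A).card := by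
  have hcw : cycleW σ = cycleW ((pick w h).trans e.1) := by
    rw [cycleW_trans, pick_spec, hq]
  exact missed_card_eq σ _ hcw A

end TGP


set_option maxHeartbeats 1000000 in
/-- For all large enough `n` divisible by 5: if `G₁, G₂` are drawn
independently and uniformly at random from `P(n,5)`, the probability that some balanced cut
`(A, Aᶜ)` of `V` misses at most `n/500` of the cycles of `G₁` and also at most `n/500` of the
cycles of `G₂` is at most `2^(−0.4·n)`.  (The probability is expressed by counting: the number
of bad pairs of graphs is at most `2^(−0.4·n)` times the squared number of graphs in
`P(n,5)`.) -/
theorem two_graph_packing :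
    ∃ n₀ : ℕ, ∀ n : ℕ, n₀ ≤ n → 5 ∣ n →
      ∀ (V : Type) [Fintype V] [DecidableEq V], Fintype.card V = n →
        (Nat.card {q : (V → V → ℝ) × (V → V → ℝ) //
            ∃ σ₁ σ₂ : V ≃ Fin (n / 5) × ZMod 5,
              q.1 = cycleW σ₁ ∧ q.2 = cycleW σ₂ ∧
              ∃ A : Finset V,
                (n : ℝ) / 3 ≤ (A.card : ℝ) ∧ (A.card : ℝ) ≤ 2 * (n : ℝ) / 3 ∧
                ((missed σ₁ A).card : ℝ) ≤ (n : ℝ) / 500 ∧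
                ((missed σ₂ A).card : ℝ) ≤ (n : ℝ) / 500} : ℝ)
          ≤ (2 : ℝ) ^ (-(0.4 : ℝ) * (n : ℝ)) *
            (Nat.card {w : V → V → ℝ // ∃ σ : V ≃ Fin (n / 5) × ZMod 5, w = cycleW σ} : ℝ) ^ 2 := by
  classical
  refine ⟨100000, ?_⟩
  intro n hn hdvd V _ _ hcard
  set m := n / 5 with hmdef
  have hn5 : n = 5 * m := (Nat.mul_div_cancel' hdvd).symm
  have hm : 20000 ≤ m := by omega
  set k := n / 500 with hkdef
  have hk : 100 * k ≤ m := by omega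
  have hcardm : Fintype.card V = 5 * m := hcard.trans hn5
  set c := Nat.card (TGP.GC m) with hc
  have hcpos : 0 < c := Nat.card_pos
  -- the three counts
  set B := Nat.card {q : (V → V → ℝ) × (V → V → ℝ) //
      ∃ σ₁ σ₂ : V ≃ Fin m × ZMod 5,
        q.1 = cycleW σ₁ ∧ q.2 = cycleW σ₂ ∧
        ∃ A : Finset V,
          (n : ℝ) / 3 ≤ (A.card : ℝ) ∧ (A.card : ℝ) ≤ 2 * (n : ℝ) / 3 ∧
          ((missed σ₁ A).card : ℝ) ≤ (n : ℝ) / 500 ∧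
          ((missed σ₂ A).card : ℝ) ≤ (n : ℝ) / 500} with hB
  set P := Nat.card {w : V → V → ℝ // ∃ σ : V ≃ Fin m × ZMod 5, w = cycleW σ} with hP
  set BadN := {p : (V ≃ Fin m × ZMod 5) × (V ≃ Fin m × ZMod 5) //
      ∃ A : Finset V, (5*m ≤ 3*A.card ∧ 3*A.card ≤ 2*(5*m)) ∧
        (missed p.1 A).card ≤ k ∧ (missed p.2 A).card ≤ k} with hBadN
  -- Injection 2 : B * c^2 ≤ Nat.card BadN
  have hinj2 : B * (c * c) ≤ Nat.card BadN := by
    rw [hB, hc, ← Nat.card_prod, ← Nat.card_prod]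
    refine Nat.card_le_card_of_injective ?_ ?_
    · refine fun p => ⟨((TGP.pick p.1.1.1 ⟨p.1.2.choose, p.1.2.choose_spec.choose_spec.1⟩).trans
          p.2.1.1,
        (TGP.pick p.1.1.2
          ⟨p.1.2.choose_spec.choose, p.1.2.choose_spec.choose_spec.2.1⟩).trans p.2.2.1), ?_⟩
      obtain ⟨⟨⟨w₁, w₂⟩, hw⟩, e₁, e₂⟩ := p
      dsimp only
      obtain ⟨σ₁, σ₂, hq1, hq2, A, hA1, hA2, hm1, hm2⟩ := hw
      dsimp only at hq1 hq2
      refine ⟨A, ⟨?_, ?_⟩, ?_, ?_⟩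
      · have h3 : (n : ℝ) ≤ 3 * A.card := by linarith
        have h4 : n ≤ 3 * A.card := by exact_mod_cast h3
        omega
      · have h3 : 3 * (A.card : ℝ) ≤ 2 * n := by linarith
        have h4 : 3 * A.card ≤ 2 * n := by exact_mod_cast h3
        omega
      · rw [TGP.missed_pick w₁ _ e₁ σ₁ hq1 A]
        have h5 : 500 * ((missed σ₁ A).card : ℝ) ≤ n := by linarith
        have h6 : 500 * (missed σ₁ A).card ≤ n := by exact_mod_cast h5
        omega
      · rw [TGP.missed_pick w₂ _ e₂ σ₂ hq2 A]
        have h5 : 500 * ((missed σ₂ A).card : ℝ) ≤ n := by linarith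
        have h6 : 500 * (missed σ₂ A).card ≤ n := by exact_mod_cast h5
        omega
    · intro p p' hpp
      obtain ⟨⟨⟨w₁, w₂⟩, hw⟩, e₁, e₂⟩ := p
      obtain ⟨⟨⟨w₁', w₂'⟩, hw'⟩, e₁', e₂'⟩ := p'
      have hval := congrArg Subtype.val hpp
      have h1 := congrArg Prod.fst hval
      have h2 := congrArg Prod.snd hval
      dsimp only at h1 h2
      have hw1 : w₁ = w₁' := by
        have := congrArg cycleW h1
        rwa [TGP.cycleW_trans, TGP.cycleW_trans, TGP.pick_spec, TGP.pick_spec] at this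
      have hw2 : w₂ = w₂' := by
        have := congrArg cycleW h2
        rwa [TGP.cycleW_trans, TGP.cycleW_trans, TGP.pick_spec, TGP.pick_spec] at this
      subst hw1
      subst hw2
      have he1 : e₁.1 = e₁'.1 :=
        TGP.trans_right_cancel _ _ (TGP.pick_eq w₁ w₁ rfl _ _) _ _ h1
      have he2 : e₂.1 = e₂'.1 :=
        TGP.trans_right_cancel _ _ (TGP.pick_eq w₂ w₂ rfl _ _) _ _ h2
      have hee1 : e₁ = e₁' := Subtype.ext he1
      have hee2 : e₂ = e₂' := Subtype.ext he2
      subst hee1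
      subst hee2
      rfl
  -- master bound
  have hmaster : Nat.card BadN * 4^m ≤ ((5*m).factorial)^2 := TGP.master hcardm hm hk
  -- n! and injection 1
  have hcardT : Fintype.card (Fin m × ZMod 5) = Fintype.card V := by
    rw [Fintype.card_prod, Fintype.card_fin, ZMod.card, hcardm, Nat.mul_comm]
  have hNfact : Nat.card (V ≃ Fin m × ZMod 5) = n.factorial := by
    rw [Nat.card_eq_fintype_card, Fintype.card_equiv (Fintype.equivOfCardEq hcardT.symm), hcard]
  have hinj1 : n.factorial ≤ P * c := by
    rw [← hNfact, hP, hc]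
    exact TGP.card_equiv_le
  -- chain
  have hchain : (B * 4^m) * (c*c) ≤ P^2 * (c*c) := by
    calc (B * 4^m) * (c*c) = (B * (c*c)) * 4^m := by ring
      _ ≤ Nat.card BadN * 4^m := Nat.mul_le_mul_right _ hinj2
      _ ≤ ((5*m).factorial)^2 := hmaster
      _ = (n.factorial)^2 := by rw [hn5]
      _ ≤ (P*c)^2 := Nat.pow_le_pow_left hinj1 2
      _ = P^2 * (c*c) := by ring
  have hfinal : B * 4^m ≤ P^2 := Nat.le_of_mul_le_mul_right hchain (by positivity)
  have hcast : ((B:ℝ)) * (4:ℝ)^m ≤ (P:ℝ)^2 := by exact_mod_cast hfinal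
  have hpow : (2:ℝ) ^ (-(0.4:ℝ) * (n:ℝ)) = ((4:ℝ)^m)⁻¹ := by
    have hnr : (n:ℝ) = 5*(m:ℝ) := by exact_mod_cast congrArg (Nat.cast : ℕ → ℝ) hn5
    rw [hnr, show -(0.4:ℝ) * (5*(m:ℝ)) = -(((2*m : ℕ)):ℝ) by push_cast; ring,
      Real.rpow_neg (by norm_num), Real.rpow_natCast]
    congr 1
    rw [pow_mul]
    norm_num
  rw [hpow, inv_mul_eq_div, le_div_iff₀ (by positivity)]
  exact hcast
end
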